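/- arXiv:solv-int/9808009 — 3 statements merged into one kernel-verified Lean document; each statement's English description precedes it below -/
import Mathlib

section
/- Let A, B, C be nonzero complex numbers, let h, V₁, V₂, V₃, w₁, w₂, w₃ be complex numbers satisfying w₂² − B⁻¹ = w₁² − A⁻¹ and w₃² − C⁻¹ = w₁² − A⁻¹, and set 𝒱 = 1 + (h/(2i))·(V₁w₁σ₁ + V₂w₂σ₂ + V₃w₃σ₃). Then det 𝒱 = 1 + (h²/4)·(v²·w₁² + F − A⁻¹·v²), where v² = V₁² + V₂² + V₃² and F = V₁²/A + V₂²/B + V₃²/C. Consequently, if h ≠ 0 and v² ≠ 0, then det 𝒱 = 0 if and only if w₁² = v⁻²·(−4/h² + A⁻¹·v² − F). -/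
open Matrix

/-- The complex 2×2 Pauli matrices. -/
noncomputable def σ₁ : Matrix (Fin 2) (Fin 2) ℂ := !![0, 1; 1, 0]
noncomputable def σ₂ : Matrix (Fin 2) (Fin 2) ℂ := !![0, -Complex.I; Complex.I, 0]
noncomputable def σ₃ : Matrix (Fin 2) (Fin 2) ℂ := !![1, 0; 0, -1]

/-- Equation (43): det 𝒱 = 1 + (h²/4)(v²w₁² + F − A⁻¹v²) for
𝒱 = 1 + (h/2i)(V₁w₁σ₁ + V₂w₂σ₂ + V₃w₃σ₃), and for h ≠ 0, v² ≠ 0 one has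
det 𝒱 = 0 iff w₁² = v⁻²(−4/h² + A⁻¹v² − F). -/
theorem stmt_6 (A B C h V₁ V₂ V₃ w₁ w₂ w₃ : ℂ)
    (hA : A ≠ 0) (hB : B ≠ 0) (hC : C ≠ 0)
    (h2 : w₂ ^ 2 - B⁻¹ = w₁ ^ 2 - A⁻¹)
    (h3 : w₃ ^ 2 - C⁻¹ = w₁ ^ 2 - A⁻¹)
    (𝒱 : Matrix (Fin 2) (Fin 2) ℂ)
    (h𝒱 : 𝒱 = (1 : Matrix (Fin 2) (Fin 2) ℂ) +
      (h / (2 * Complex.I)) • ((V₁ * w₁) • σ₁ + (V₂ * w₂) • σ₂ + (V₃ * w₃) • σ₃))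
    (vsq F : ℂ)
    (hvsq : vsq = V₁ ^ 2 + V₂ ^ 2 + V₃ ^ 2)
    (hF : F = V₁ ^ 2 / A + V₂ ^ 2 / B + V₃ ^ 2 / C) :
    𝒱.det = 1 + (h ^ 2 / 4) * (vsq * w₁ ^ 2 + F - A⁻¹ * vsq) ∧
    (h ≠ 0 → vsq ≠ 0 →
      (𝒱.det = 0 ↔ w₁ ^ 2 = vsq⁻¹ * (-4 / h ^ 2 + A⁻¹ * vsq - F))) := by

  have hk : h / (2 * Complex.I) = -(Complex.I * h) / 2 := by
    rw [div_eq_div_iff (by simp [Complex.I_ne_zero]) two_ne_zero]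
    linear_combination 2 * h * Complex.I_sq
  have hdet : 𝒱.det = 1 + (h ^ 2 / 4) * (vsq * w₁ ^ 2 + F - A⁻¹ * vsq) := by
    rw [hk] at h𝒱
    have hFA : F = V₁ ^ 2 * A⁻¹ + V₂ ^ 2 * B⁻¹ + V₃ ^ 2 * C⁻¹ := by
      rw [hF]; ring
    clear hF
    subst h𝒱 hvsq hFA
    simp [σ₁, σ₂, σ₃, Matrix.det_fin_two, Matrix.one_fin_two]
    linear_combination (h^2/4*V₂^2)*h2 + (h^2/4*V₃^2)*h3
      - (h^2/4*(V₁^2*w₁^2+V₂^2*w₂^2+V₃^2*w₃^2))*Complex.I_sq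
      + (h^2*V₂^2*w₂^2/4*Complex.I^2)*Complex.I_sq
  refine ⟨hdet, fun hh hv => ?_⟩
  rw [hdet]
  have hinv := mul_inv_cancel₀ hh
  rw [eq_inv_mul_iff_mul_eq₀ hv]
  constructor
  · intro he
    linear_combination (4/h^2)*he - (1+h*h⁻¹)*(vsq*w₁^2+F-A⁻¹*vsq)*hinv
  · intro he
    linear_combination (h^2/4)*he - (1+h*h⁻¹)*hinv
end

section
/- Let A, B, C be positive real numbers, let γ and h be real numbers, and let M, M̂ ∈ ℝ³ satisfy the discrete Euler equation M̂ − M = (γh/4)·((M + M̂) × I⁻¹(M + M̂)), where I⁻¹(v) = (v₁/A, v₂/B, v₃/C) and × is the cross product on ℝ³. Then ‖M̂‖ = ‖M‖. -/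
/-- The inverse inertia tensor I⁻¹ = diag(A,B,C)⁻¹ acting on a vector. -/
noncomputable def inertiaInv (A B C : ℝ) (v : Fin 3 → ℝ) : Fin 3 → ℝ :=
  ![v 0 / A, v 1 / B, v 2 / C]

/-- The discrete Euler equation M̂ − M = (γh/4)(M + M̂) × I⁻¹(M + M̂) preserves the
Euclidean norm of the angular momentum: ‖M̂‖ = ‖M‖. -/
theorem stmt_13 (A B C γ h : ℝ) (hA : 0 < A) (hB : 0 < B) (hC : 0 < C)
    (M Mhat : EuclideanSpace ℝ (Fin 3))
    (hEuler : ∀ i : Fin 3, Mhat i - M i =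
      (γ * h / 4) * crossProduct (fun j => M j + Mhat j)
        (inertiaInv A B C (fun j => M j + Mhat j)) i) :
    ‖Mhat‖ = ‖M‖ := by
  have h0 := hEuler 0
  have h1 := hEuler 1
  have h2 := hEuler 2
  simp [crossProduct, inertiaInv] at h0 h1 h2
  have key : ∑ i : Fin 3, Mhat i ^ 2 = ∑ i : Fin 3, M i ^ 2 := by
    have e0 : Mhat 0 ^ 2 - M 0 ^ 2 = (Mhat 0 - M 0) * (M 0 + Mhat 0) := by ring
    have e1 : Mhat 1 ^ 2 - M 1 ^ 2 = (Mhat 1 - M 1) * (M 1 + Mhat 1) := by ring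
    have e2 : Mhat 2 ^ 2 - M 2 ^ 2 = (Mhat 2 - M 2) * (M 2 + Mhat 2) := by ring
    rw [Fin.sum_univ_three, Fin.sum_univ_three]
    have hA' := hA.ne'
    have hB' := hB.ne'
    have hC' := hC.ne'
    field_simp at h0 h1 h2
    have key0 : (Mhat 0 ^ 2 + Mhat 1 ^ 2 + Mhat 2 ^ 2
        - (M 0 ^ 2 + M 1 ^ 2 + M 2 ^ 2)) * (4 * A * B * C) = 0 := by
      linear_combination (A * (M 0 + Mhat 0)) * h0 + (B * (M 1 + Mhat 1)) * h1
        + (C * (M 2 + Mhat 2)) * h2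
    have habc : (4 * A * B * C) ≠ 0 := by positivity
    have := mul_eq_zero.mp key0
    rcases this with hz | hz
    · linarith
    · exact absurd hz habc
  have : ‖Mhat‖ ^ 2 = ‖M‖ ^ 2 := by
    rw [EuclideanSpace.norm_eq, EuclideanSpace.norm_eq]
    rw [Real.sq_sqrt (by positivity), Real.sq_sqrt (by positivity)]
    simpa [sq_abs] using key
  have h1 : (0:ℝ) ≤ ‖Mhat‖ := norm_nonneg _
  have h2 : (0:ℝ) ≤ ‖M‖ := norm_nonneg _
  nlinarith
end

section
/- Let A, B, C be positive real numbers, let γ and h be real numbers, and let M, M̂ ∈ ℝ³ satisfy the discrete Euler equation M̂ − M = (γh/4)·((M + M̂) × I⁻¹(M + M̂)), where I⁻¹(v) = (v₁/A, v₂/B, v₃/C) and × is the cross product on ℝ³. Then M̂₁²/A + M̂₂²/B + M̂₃²/C = M₁²/A + M₂²/B + M₃²/C. -/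
/-- The discrete Euler equation M̂ − M = (γh/4)(M + M̂) × I⁻¹(M + M̂) preserves the
energy: M̂₁²/A + M̂₂²/B + M̂₃²/C = M₁²/A + M₂²/B + M₃²/C. -/
theorem stmt_14 (A B C γ h : ℝ) (hA : 0 < A) (hB : 0 < B) (hC : 0 < C)
    (M Mhat : Fin 3 → ℝ)
    (hEuler : Mhat - M = (γ * h / 4) • crossProduct (M + Mhat)
        (inertiaInv A B C (M + Mhat))) :
    Mhat 0 ^ 2 / A + Mhat 1 ^ 2 / B + Mhat 2 ^ 2 / C
      = M 0 ^ 2 / A + M 1 ^ 2 / B + M 2 ^ 2 / C := by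
  have h0 := congrFun hEuler 0
  have h1 := congrFun hEuler 1
  have h2 := congrFun hEuler 2
  simp [crossProduct, inertiaInv, Pi.sub_apply, Pi.add_apply] at h0 h1 h2
  field_simp at h0 h1 h2 ⊢
  linear_combination ((Mhat 0 + M 0)/4) * h0 + ((Mhat 1 + M 1)/4) * h1 + ((Mhat 2 + M 2)/4) * h2
end
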